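/- For every integer k ≥ 2, ∫₀^{2πk} sin θ · sin(θ/k) · (∫₀^θ cos τ · sin(τ/k) dτ) dθ = π k³ / (2(k² − 1)). Equivalently, (1/(2πk)) times this iterated integral equals 1/α with α = 4(1 − k⁻²). -/

import Mathlib

set_option maxHeartbeats 2000000

open Real intervalIntegral

private lemma intCos (c : ℝ) (hc : c ≠ 0) (A : ℝ) :
    ∫ θ in (0:ℝ)..A, Real.cos (c * θ) = Real.sin (c * A) / c := by
  rw [intervalIntegral.integral_comp_mul_left Real.cos hc, mul_zero, integral_cos,
    Real.sin_zero, sub_zero, smul_eq_mul]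
  ring

private lemma intSin (c : ℝ) (hc : c ≠ 0) (A : ℝ) :
    ∫ θ in (0:ℝ)..A, Real.sin (c * θ) = (1 - Real.cos (c * A)) / c := by
  rw [intervalIntegral.integral_comp_mul_left Real.sin hc, mul_zero, integral_sin,
    Real.cos_zero, smul_eq_mul]
  ring

/-- Averaging coefficient ν₃₄: for every integer k ≥ 2,
∫₀^{2πk} sin θ · sin(θ/k) · (∫₀^θ cos τ · sin(τ/k) dτ) dθ = πk³/(2(k²−1));
equivalently, (1/(2πk)) times this iterated integral equals 1/α with α = 4(1 − k⁻²). -/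
theorem stmt6 (k : ℕ) (hk : 2 ≤ k) :
    (∫ θ in (0:ℝ)..(2 * Real.pi * k),
        Real.sin θ * Real.sin (θ / k) * ∫ τ in (0:ℝ)..θ, Real.cos τ * Real.sin (τ / k))
      = Real.pi * (k : ℝ) ^ 3 / (2 * ((k : ℝ) ^ 2 - 1)) ∧
    (1 / (2 * Real.pi * k)) *
      (∫ θ in (0:ℝ)..(2 * Real.pi * k),
        Real.sin θ * Real.sin (θ / k) * ∫ τ in (0:ℝ)..θ, Real.cos τ * Real.sin (τ / k))
      = 1 / (4 * (1 - ((k : ℝ) ^ 2)⁻¹)) := by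
  have hkr : (2:ℝ) ≤ (k:ℝ) := by exact_mod_cast hk
  have hk0 : (k:ℝ) ≠ 0 := by positivity
  have hkpos : (0:ℝ) < k := by linarith
  set a : ℝ := 1 + 1/(k:ℝ) with ha_def
  set b : ℝ := 1 - 1/(k:ℝ) with hb_def
  have ha0 : a ≠ 0 := by
    have : 0 < 1/(k:ℝ) := by positivity
    rw [ha_def]; nlinarith
  have hb0 : b ≠ 0 := by
    have : 1/(k:ℝ) ≤ 1/2 := by
      rw [div_le_div_iff₀ hkpos (by norm_num)]; linarith
    rw [hb_def]; nlinarith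
  have hsq : ((k:ℝ)^2 - 1) ≠ 0 := by nlinarith
  -- inner integral
  have hinner : ∀ θ : ℝ, (∫ τ in (0:ℝ)..θ, Real.cos τ * Real.sin (τ / k))
      = (1 - Real.cos (a*θ))/(2*a) - (1 - Real.cos (b*θ))/(2*b) := by
    intro θ
    have hpt : ∀ τ : ℝ, Real.cos τ * Real.sin (τ / k)
        = Real.sin (a*τ) / 2 - Real.sin (b*τ) / 2 := by
      intro τ
      have h1 : a*τ = τ + τ/(k:ℝ) := by rw [ha_def]; ring
      have h2 : b*τ = τ - τ/(k:ℝ) := by rw [hb_def]; ring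
      rw [h1, h2, Real.sin_add, Real.sin_sub]; ring
    rw [intervalIntegral.integral_congr (g := fun τ => Real.sin (a*τ)/2 - Real.sin (b*τ)/2)
      (fun τ _ => hpt τ)]
    have ia : IntervalIntegrable (fun τ => Real.sin (a*τ)/2) MeasureTheory.volume 0 θ :=
      (Continuous.intervalIntegrable (by continuity) _ _)
    have ib : IntervalIntegrable (fun τ => Real.sin (b*τ)/2) MeasureTheory.volume 0 θ :=
      (Continuous.intervalIntegrable (by continuity) _ _)
    rw [intervalIntegral.integral_sub ia ib, intervalIntegral.integral_div,
      intervalIntegral.integral_div, intSin a ha0, intSin b hb0]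
    have ha0' : ((k:ℝ)+1) ≠ 0 := by positivity
    have hb0' : ((k:ℝ)-1) ≠ 0 := by nlinarith
    rw [ha_def, hb_def]
    field_simp
  set T : ℝ := 2 * Real.pi * (k:ℝ) with hT
  -- pointwise expansion of outer integrand
  have key : ∀ θ : ℝ, Real.sin θ * Real.sin (θ / k) *
      ((1 - Real.cos (a*θ))/(2*a) - (1 - Real.cos (b*θ))/(2*b))
      = (1/(8*a) + 1/(8*b))
        + (-(1/a - 1/b)/4) * Real.cos (a*θ)
        + ((1/a - 1/b)/4) * Real.cos (b*θ)
        + (-(1/a + 1/b)/8) * Real.cos (2*θ)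
        + (-(1/a + 1/b)/8) * Real.cos ((2/(k:ℝ))*θ)
        + (1/(8*a)) * Real.cos (2*(a*θ))
        + (1/(8*b)) * Real.cos (2*(b*θ)) := by
    intro θ
    have hs : Real.sin θ * Real.sin (θ / k)
        = (Real.cos (b*θ) - Real.cos (a*θ))/2 := by
      have h1 : a*θ = θ + θ/(k:ℝ) := by rw [ha_def]; ring
      have h2 : b*θ = θ - θ/(k:ℝ) := by rw [hb_def]; ring
      rw [h1, h2, Real.cos_sub, Real.cos_add]; ring
    have h2θ : (2:ℝ)*θ = a*θ + b*θ := by rw [ha_def, hb_def]; ring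
    have h2k : ((2:ℝ)/(k:ℝ))*θ = a*θ - b*θ := by rw [ha_def, hb_def]; ring
    rw [hs, h2θ, h2k, Real.cos_add, Real.cos_sub, Real.cos_two_mul, Real.cos_two_mul]
    have hpy_a : Real.sin (a*θ)^2 = 1 - Real.cos (a*θ)^2 := by
      have := Real.sin_sq_add_cos_sq (a*θ); nlinarith
    have hpy_b : Real.sin (b*θ)^2 = 1 - Real.cos (b*θ)^2 := by
      have := Real.sin_sq_add_cos_sq (b*θ); nlinarith
    field_simp
    ring
  -- sine vanishing at the endpoints
  have hsin : ∀ (n : ℤ) (c : ℝ), c * T = (n:ℝ) * Real.pi → Real.sin (c*T) = 0 := by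
    intro n c h
    rw [h]; exact Real.sin_int_mul_pi n
  have sa : Real.sin (a*T) = 0 := by
    apply hsin (2*(k:ℤ)+2)
    rw [ha_def, hT]; push_cast; field_simp
  have sb : Real.sin (b*T) = 0 := by
    apply hsin (2*(k:ℤ)-2)
    rw [hb_def, hT]; push_cast; field_simp
  have s2 : Real.sin ((2:ℝ)*T) = 0 := by
    apply hsin (4*(k:ℤ))
    rw [hT]; push_cast; ring
  have s2k : Real.sin ((2/(k:ℝ))*T) = 0 := by
    apply hsin 4
    rw [hT]; push_cast; field_simp; ring
  have s2a : Real.sin ((2*a)*T) = 0 := by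
    apply hsin (4*(k:ℤ)+4)
    rw [ha_def, hT]; push_cast; field_simp; ring
  have s2b : Real.sin ((2*b)*T) = 0 := by
    apply hsin (4*(k:ℤ)-4)
    rw [hb_def, hT]; push_cast; field_simp; ring
  -- compute the outer integral
  have hI : ∀ (C c : ℝ), IntervalIntegrable (fun θ => C * Real.cos (c*θ))
      MeasureTheory.volume 0 T := fun C c =>
    (Continuous.intervalIntegrable (by continuity) _ _)
  have hCI : ∀ (C c : ℝ), c ≠ 0 → (∫ θ in (0:ℝ)..T, C * Real.cos (c*θ))
      = C * (Real.sin (c*T)/c) := by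
    intro C c hc
    rw [intervalIntegral.integral_const_mul, intCos c hc]
  have main : (∫ θ in (0:ℝ)..T,
      Real.sin θ * Real.sin (θ / k) * ∫ τ in (0:ℝ)..θ, Real.cos τ * Real.sin (τ / k))
      = Real.pi * (k : ℝ) ^ 3 / (2 * ((k : ℝ) ^ 2 - 1)) := by
    rw [intervalIntegral.integral_congr (g := fun θ =>
      (1/(8*a) + 1/(8*b))
        + (-(1/a - 1/b)/4) * Real.cos (a*θ)
        + ((1/a - 1/b)/4) * Real.cos (b*θ)
        + (-(1/a + 1/b)/8) * Real.cos (2*θ)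
        + (-(1/a + 1/b)/8) * Real.cos ((2/(k:ℝ))*θ)
        + (1/(8*a)) * Real.cos (2*(a*θ))
        + (1/(8*b)) * Real.cos (2*(b*θ)))
      (fun θ _ => by rw [hinner θ]; exact key θ)]
    have e1 : ∀ θ:ℝ, 2*(a*θ) = (2*a)*θ := fun θ => by ring
    have e2 : ∀ θ:ℝ, 2*(b*θ) = (2*b)*θ := fun θ => by ring
    simp only [e1, e2]
    have i0 : IntervalIntegrable (fun _ : ℝ => (1/(8*a) + 1/(8*b)))
        MeasureTheory.volume 0 T := intervalIntegrable_const
    have h2a0 : (2*a) ≠ 0 := by positivity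
    have h2b0 : (2*b) ≠ 0 := by simpa using hb0
    rw [intervalIntegral.integral_add (((((i0.add (hI _ a)).add (hI _ b)).add
        (hI _ 2)).add (hI _ (2/(k:ℝ)))).add (hI _ (2*a))) (hI _ (2*b))]
    rw [intervalIntegral.integral_add ((((i0.add (hI _ a)).add (hI _ b)).add
        (hI _ 2)).add (hI _ (2/(k:ℝ)))) (hI _ (2*a))]
    rw [intervalIntegral.integral_add (((i0.add (hI _ a)).add (hI _ b)).add
        (hI _ 2)) (hI _ (2/(k:ℝ)))]
    rw [intervalIntegral.integral_add ((i0.add (hI _ a)).add (hI _ b)) (hI _ 2)]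
    rw [intervalIntegral.integral_add (i0.add (hI _ a)) (hI _ b)]
    rw [intervalIntegral.integral_add i0 (hI _ a)]
    rw [intervalIntegral.integral_const]
    rw [hCI _ a ha0, hCI _ b hb0, hCI _ 2 (by norm_num),
      hCI _ (2/(k:ℝ)) (by positivity), hCI _ (2*a) h2a0, hCI _ (2*b) h2b0]
    rw [sa, sb, s2, s2k, s2a, s2b]
    simp only [zero_div, mul_zero, add_zero, sub_zero, smul_eq_mul]
    rw [hT, ha_def, hb_def]
    have h1 : ((k:ℝ)-1) ≠ 0 := by nlinarith
    have h2 : ((k:ℝ)+1) ≠ 0 := by positivity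
    field_simp [h1, h2]
    ring
  refine ⟨main, ?_⟩
  rw [main]
  have hpi : Real.pi ≠ 0 := Real.pi_ne_zero
  rw [hT]
  field_simp
  ring
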